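/- The S-module map S → R_∞^{(2)}/D_∞(R_∞^{(3)}) sending s to the class of s·x_{2,2} is surjective, and its kernel is exactly the ideal of S generated by x_{2,0}² and by the variables x_{n,0} with n ≥ 3; hence R_∞^{(2)}/D_∞(R_∞^{(3)}) ≅ S/(x_{2,0}², x_{n,0} : n ≥ 3) as S-modules. (This is the algebraic form of the theorem that H_st^even(Λ³H̃_ℚ) ≅ (Sym_ℚ(𝓔)/(e₁², e_α, α ≥ 2)){m̄_{0,2}}.) -/

import Mathlib

open MvPolynomial
set_option maxHeartbeats 1000000
set_option synthInstance.maxHeartbeats 400000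

noncomputable section

/-- The index set `{(n,k) : 2 ≤ n, 0 ≤ k ≤ n}` of the variables `x_{n,k}` of `R_∞`. -/
abbrev Idx : Type := {p : ℕ × ℕ // 2 ≤ p.1 ∧ p.2 ≤ p.1}

/-- The polynomial ring `R_∞ = ℚ[x_{n,k} : n ≥ 2, 0 ≤ k ≤ n]`. -/
abbrev Rinf : Type := MvPolynomial Idx ℚ

/-- The variable `x_{n,k}` (and `0` for out-of-range indices, which never occur below). -/
def xv (n k : ℕ) : Rinf := if h : 2 ≤ n ∧ k ≤ n then X ⟨(n, k), h⟩ else 0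

/-- The derivation `D_∞` with `D_∞(x_{n,k}) = x_{n,k−1}` for `1 ≤ k ≤ n` and
`D_∞(x_{n,0}) = 0`. -/
def Dinf : Derivation ℚ Rinf Rinf :=
  MvPolynomial.mkDerivation ℚ fun s : Idx =>
    if s.1.2 = 0 then 0 else xv s.1.1 (s.1.2 - 1)

/-- The weight `wt(x_{n,k}) = k`. -/
def wt : Idx → ℕ := fun s => s.1.2

/-- `R_∞^{(d)}`: the `ℚ`-span of the monomials of weight `d`. -/
def W (d : ℕ) : Submodule ℚ Rinf := weightedHomogeneousSubmodule ℚ wt d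

/-- `S = R_∞^{(0)} = ℚ[x_{n,0} : n ≥ 2]`, as a subalgebra of `R_∞`. -/
def SAlg : Subalgebra ℚ Rinf := Algebra.adjoin ℚ {f : Rinf | ∃ n, 2 ≤ n ∧ f = xv n 0}

lemma xv0_mem (n : ℕ) : xv n 0 ∈ SAlg := by
  by_cases h : 2 ≤ n
  · exact Algebra.subset_adjoin ⟨n, h, rfl⟩
  · have hz : xv n 0 = 0 := by
      rw [xv, dif_neg]
      exact fun hc => h hc.1
    rw [hz]
    exact Subalgebra.zero_mem _

/-- The element `e_i = x_{i+1,0}` of `S`; below `eS n` denotes `x_{n,0} ∈ S`, so that the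
class `e_i` of the paper is `eS (i+1)`. -/
def eS (n : ℕ) : SAlg := ⟨xv n 0, xv0_mem n⟩


-- ### basic lemmas
lemma xv_eq (n k : ℕ) (h2 : 2 ≤ n) (hk : k ≤ n) : xv n k = X ⟨(n, k), ⟨h2, hk⟩⟩ := by
  rw [xv, dif_pos ⟨h2, hk⟩]

lemma D_X (s : Idx) : Dinf (X s) = if s.1.2 = 0 then 0 else xv s.1.1 (s.1.2 - 1) := by
  rw [Dinf, mkDerivation_X]

lemma D_xv (n k : ℕ) (h2 : 2 ≤ n) (hk : k ≤ n) (h1 : 1 ≤ k) :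
    Dinf (xv n k) = xv n (k - 1) := by
  rw [xv_eq n k h2 hk, D_X]
  simp only []
  rw [if_neg (by omega)]

lemma D_xv0 (n : ℕ) : Dinf (xv n 0) = 0 := by
  by_cases h : 2 ≤ n
  · rw [xv_eq n 0 h (by omega), D_X]
    simp
  · have : xv n 0 = 0 := by rw [xv, dif_neg (fun hc => h hc.1)]
    rw [this, map_zero]

lemma xv_hom (n k : ℕ) : (xv n k).IsWeightedHomogeneous wt k := by
  rw [xv]
  split
  · have := isWeightedHomogeneous_X ℚ wt (⟨(n, k), by assumption⟩ : Idx)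
    exact this
  · exact isWeightedHomogeneous_zero ℚ wt k

lemma hom_mul {a b : Rinf} {i j k : ℕ} (ha : a.IsWeightedHomogeneous wt i)
    (hb : b.IsWeightedHomogeneous wt j) (h : i + j = k) :
    (a * b).IsWeightedHomogeneous wt k := h ▸ ha.mul hb

-- D vanishes on S
lemma D_S {s : Rinf} (hs : s ∈ SAlg) : Dinf s = 0 := by
  induction hs using Algebra.adjoin_induction with
  | mem x hx =>
    obtain ⟨n, _, rfl⟩ := hx
    exact D_xv0 n
  | algebraMap r => simp
  | add x y hx hy ihx ihy => rw [map_add, ihx, ihy, add_zero]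
  | mul x y hx hy ihx ihy => rw [Dinf.leibniz, ihx, ihy, smul_zero, smul_zero, add_zero]

lemma S_hom {s : Rinf} (hs : s ∈ SAlg) : s.IsWeightedHomogeneous wt 0 := by
  induction hs using Algebra.adjoin_induction with
  | mem x hx =>
    obtain ⟨n, _, rfl⟩ := hx
    exact xv_hom n 0
  | algebraMap r => exact isWeightedHomogeneous_C wt r
  | add x y hx hy ihx ihy => exact ihx.add ihy
  | mul x y hx hy ihx ihy => exact hom_mul ihx ihy rfl

def Mim : Submodule ℚ Rinf := Submodule.map Dinf.toLinearMap (W 3)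

lemma mem_Mim {g : Rinf} (hg : g.IsWeightedHomogeneous wt 3) : Dinf g ∈ Mim :=
  ⟨g, hg, rfl⟩

lemma Mim_smul {s f : Rinf} (hs : s ∈ SAlg) (hf : f ∈ Mim) : s * f ∈ Mim := by
  obtain ⟨g, hg, rfl⟩ := hf
  refine ⟨s * g, hom_mul (S_hom hs) hg rfl, ?_⟩
  show Dinf (s * g) = s * Dinf g
  rw [Dinf.leibniz, D_S hs, smul_zero, add_zero, smul_eq_mul]


lemma xv_mem_W (n k : ℕ) : xv n k ∈ W k := xv_hom n k

lemma mulW {a b : Rinf} {i j k : ℕ} (ha : a ∈ W i) (hb : b ∈ W j) (h : i + j = k) :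
    a * b ∈ W k := hom_mul ha hb h

lemma gen_a {n : ℕ} (hn : 3 ≤ n) : xv n 2 ∈ Mim := by
  have h := mem_Mim (g := xv n 3) (xv_hom n 3)
  rwa [D_xv n 3 (by omega) hn (by omega)] at h

lemma leib (a b : Rinf) : Dinf (a * b) = a * Dinf b + b * Dinf a := by
  rw [Dinf.leibniz, smul_eq_mul, smul_eq_mul]

lemma gen_b {n p : ℕ} (hn : 3 ≤ n) (hp : 2 ≤ p) : xv n 1 * xv p 1 ∈ Mim := by
  have h1 : Dinf (xv n 2 * xv p 1) ∈ Mim :=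
    mem_Mim (mulW (xv_mem_W n 2) (xv_mem_W p 1) rfl)
  rw [leib, D_xv p 1 hp (by omega) le_rfl, D_xv n 2 (by omega) (by omega) (by omega)] at h1
  have h2 : xv p 0 * xv n 2 ∈ Mim := Mim_smul (xv0_mem p) (gen_a hn)
  have := Submodule.sub_mem _ h1 h2
  have heq : xv n 2 * xv p 0 + xv p 1 * xv n 1 - xv p 0 * xv n 2 = xv n 1 * xv p 1 := by ring
  rwa [heq] at this

lemma gen_c : xv 2 1 * xv 2 1 + xv 2 0 * xv 2 2 ∈ Mim := by
  have h1 : Dinf (xv 2 2 * xv 2 1) ∈ Mim :=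
    mem_Mim (mulW (xv_mem_W 2 2) (xv_mem_W 2 1) rfl)
  rw [leib, D_xv 2 1 le_rfl (by omega) le_rfl, D_xv 2 2 le_rfl le_rfl (by omega)] at h1
  have heq : xv 2 2 * xv 2 0 + xv 2 1 * xv 2 1
      = xv 2 1 * xv 2 1 + xv 2 0 * xv 2 2 := by ring
  rwa [heq] at h1

lemma gen_e {n : ℕ} (hn : 3 ≤ n) : xv n 0 * xv 2 2 ∈ Mim := by
  have hg : xv 2 2 * xv n 1 - xv 2 1 * xv n 2 + xv 2 0 * xv n 3 ∈ W 3 :=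
    Submodule.add_mem _
      (Submodule.sub_mem _ (mulW (xv_mem_W 2 2) (xv_mem_W n 1) rfl)
        (mulW (xv_mem_W 2 1) (xv_mem_W n 2) rfl))
      (mulW (xv_mem_W 2 0) (xv_mem_W n 3) rfl)
  have h1 := mem_Mim hg
  rw [map_add, map_sub, leib, leib, leib,
    D_xv 2 2 le_rfl le_rfl (by omega), D_xv 2 1 le_rfl (by omega) le_rfl,
    D_xv n 1 (by omega) (by omega) le_rfl, D_xv n 2 (by omega) (by omega) (by omega),
    D_xv n 3 (by omega) hn (by omega), D_xv0] at h1
  have heq : xv 2 2 * xv n 0 + xv n 1 * xv 2 1 -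
        (xv 2 1 * xv n 1 + xv n 2 * xv 2 0) +
        (xv 2 0 * xv n 2 + xv n 3 * 0) = xv n 0 * xv 2 2 := by ring
  rwa [heq] at h1

lemma gen_f : xv 2 0 * xv 2 0 * xv 2 2 ∈ Mim := by
  set h := xv 2 0 * (xv 2 1 * xv 2 2) with hh
  have hg : h + h + h - xv 2 1 * (xv 2 1 * xv 2 1) ∈ W 3 := by
    have hW : h ∈ W 3 := mulW (xv_mem_W 2 0) (mulW (xv_mem_W 2 1) (xv_mem_W 2 2) rfl) rfl
    exact Submodule.sub_mem _ (Submodule.add_mem _ (Submodule.add_mem _ hW hW) hW)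
      (mulW (xv_mem_W 2 1) (mulW (xv_mem_W 2 1) (xv_mem_W 2 1) rfl) rfl)
  have h1 := Submodule.smul_mem Mim ((3:ℚ)⁻¹) (mem_Mim hg)
  set z := xv 2 0 * xv 2 0 * xv 2 2 with hz
  have hD : Dinf (h + h + h - xv 2 1 * (xv 2 1 * xv 2 1)) = z + z + z := by
    rw [map_sub, map_add, map_add, hh, leib, leib, leib, leib,
      D_xv 2 1 le_rfl (by omega) le_rfl, D_xv 2 2 le_rfl le_rfl (by omega), D_xv0]
    ring
  rw [hD] at h1
  have key3 : (3:ℚ)⁻¹ • (z + z + z) = z := by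
    have h3 : z + z + z = (3:ℚ) • z := by
      rw [show ((3:ℚ) = ((3:ℕ):ℚ)) by norm_num, Nat.cast_smul_eq_nsmul]
      ring
    rw [h3, smul_smul]
    norm_num
  rwa [key3] at h1


-- ### Part 1
lemma monomial_mem_S (m : Idx →₀ ℕ) (c : ℚ) (h : ∀ s ∈ m.support, wt s = 0) :
    (monomial m c : Rinf) ∈ SAlg := by
  induction m using Finsupp.induction with
  | zero =>
    rw [← C_apply, ← MvPolynomial.algebraMap_eq]
    exact Subalgebra.algebraMap_mem _ _
  | single_add a b f hfa hb ih =>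
    have hmul : (monomial (Finsupp.single a b + f) c : Rinf)
        = X a ^ b * monomial f c := by
      rw [X_pow_eq_monomial, monomial_mul, one_mul]
    rw [hmul]
    have hwa : wt a = 0 := by
      apply h
      rw [Finsupp.mem_support_iff, Finsupp.add_apply, Finsupp.single_eq_same]
      rw [Finsupp.notMem_support_iff] at hfa
      omega
    refine mul_mem (pow_mem ?_ b) (ih ?_)
    · obtain ⟨⟨n, k⟩, hn, hk⟩ := a
      have hk0 : k = 0 := hwa
      subst hk0
      have : (X (⟨(n, 0), ⟨hn, hk⟩⟩ : Idx) : Rinf) = xv n 0 := by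
        rw [xv_eq n 0 hn (Nat.zero_le _)]
      rw [this]
      exact xv0_mem _
    · intro s hs
      apply h
      rw [Finsupp.mem_support_iff, Finsupp.add_apply]
      rw [Finsupp.mem_support_iff] at hs
      omega

lemma extract (m : Idx →₀ ℕ) (d : ℕ) (hm : Finsupp.weight wt m = d) (hd : d ≠ 0) :
    ∃ s0 : Idx, m s0 ≠ 0 ∧ 1 ≤ wt s0 ∧ wt s0 ≤ d := by
  have h1 : ∃ s0 ∈ m.support, wt s0 ≠ 0 := by
    by_contra h
    push_neg at h
    have h0 : Finsupp.weight wt m = 0 := by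
      rw [Finsupp.weight_apply, Finsupp.sum]
      exact Finset.sum_eq_zero fun s hs => by rw [h s hs, smul_zero]
    omega
  obtain ⟨s0, hs0, hw⟩ := h1
  rw [Finsupp.mem_support_iff] at hs0
  refine ⟨s0, hs0, by omega, ?_⟩
  rw [← hm]
  exact Finsupp.le_weight_of_ne_zero' wt hs0

lemma wt0_of_weight0 {m : Idx →₀ ℕ} (hm : Finsupp.weight wt m = 0) :
    ∀ s ∈ m.support, wt s = 0 := by
  intro s hs
  rw [Finsupp.mem_support_iff] at hs
  have := Finsupp.le_weight_of_ne_zero' wt hs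
  omega

lemma split_mon (m : Idx →₀ ℕ) (s0 : Idx) (h : m s0 ≠ 0) (c : ℚ) :
    (monomial m c : Rinf) = X s0 * monomial (m - Finsupp.single s0 1) c ∧
    Finsupp.weight wt (m - Finsupp.single s0 1) + wt s0 = Finsupp.weight wt m := by
  have hsplit : m = Finsupp.single s0 1 + (m - Finsupp.single s0 1) := by
    ext a
    by_cases ha : a = s0
    · subst ha
      simp only [Finsupp.add_apply, Finsupp.tsub_apply, Finsupp.single_eq_same]
      omega
    · simp only [Finsupp.add_apply, Finsupp.tsub_apply,
        Finsupp.single_eq_of_ne' (fun hc => ha hc.symm)]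
      omega
  constructor
  · conv_lhs => rw [hsplit]
    rw [show (X s0 : Rinf) = monomial (Finsupp.single s0 1) 1 from rfl,
      monomial_mul, one_mul]
  · conv_rhs => rw [hsplit]
    rw [map_add]
    have : Finsupp.weight wt (Finsupp.single s0 1) = wt s0 := by
      rw [Finsupp.weight_apply, Finsupp.sum_single_index (by simp), one_smul]
    omega

lemma xv_of_idx (s0 : Idx) : xv s0.1.1 s0.1.2 = X s0 := by
  rw [xv_eq _ _ s0.2.1 s0.2.2]

lemma xv_wt (s0 : Idx) (k : ℕ) (h : wt s0 = k) : xv s0.1.1 k = X s0 := by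
  rw [← h]
  exact xv_of_idx s0

lemma key (m : Idx →₀ ℕ) (c : ℚ) (hm : Finsupp.weight wt m = 2) :
    ∃ s : SAlg, (monomial m c : Rinf) - (s : Rinf) * xv 2 2 ∈ Mim := by
  obtain ⟨s0, h0, hw1, hw2⟩ := extract m 2 hm (by omega)
  obtain ⟨hmon, hwt⟩ := split_mon m s0 h0 c
  set m' := m - Finsupp.single s0 1 with hm'def
  have hn2 : 2 ≤ s0.1.1 := s0.2.1
  have hkn : s0.1.2 ≤ s0.1.1 := s0.2.2
  have hwts0 : wt s0 = s0.1.2 := rfl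
  rcases (show wt s0 = 1 ∨ wt s0 = 2 by omega) with h2 | h2
  · -- weight-1 variable
    have hw' : Finsupp.weight wt m' = 1 := by omega
    obtain ⟨s1, h1, hw1', hw2'⟩ := extract m' 1 hw' (by omega)
    obtain ⟨hmon2, hwt2⟩ := split_mon m' s1 h1 c
    set m'' := m' - Finsupp.single s1 1 with hm''def
    have hp2 : 2 ≤ s1.1.1 := s1.2.1
    have hwts1 : wt s1 = s1.1.2 := rfl
    have h2' : wt s1 = 1 := by omega
    have hw'' : Finsupp.weight wt m'' = 0 := by omega
    have hS : (monomial m'' c : Rinf) ∈ SAlg := monomial_mem_S _ _ (wt0_of_weight0 hw'')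
    have hx0 : xv s0.1.1 1 = X s0 := xv_wt s0 1 h2
    have hx1 : xv s1.1.1 1 = X s1 := xv_wt s1 1 h2'
    have hfeq : (monomial m c : Rinf)
        = monomial m'' c * (xv s0.1.1 1 * xv s1.1.1 1) := by
      rw [hmon, hmon2, hx0, hx1]; ring
    rcases (show 3 ≤ s0.1.1 ∨ s0.1.1 = 2 by omega) with h3 | h3
    · refine ⟨0, ?_⟩
      have : (((0 : SAlg) : Rinf)) = 0 := rfl
      rw [this, zero_mul, sub_zero, hfeq]
      exact Mim_smul hS (gen_b h3 s1.2.1)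
    · rcases (show 3 ≤ s1.1.1 ∨ s1.1.1 = 2 by omega) with h4 | h4
      · refine ⟨0, ?_⟩
        have : (((0 : SAlg) : Rinf)) = 0 := rfl
        rw [this, zero_mul, sub_zero, hfeq]
        have : xv s0.1.1 1 * xv s1.1.1 1 = xv s1.1.1 1 * xv s0.1.1 1 := by ring
        rw [this]
        exact Mim_smul hS (gen_b h4 s0.2.1)
      · refine ⟨-⟨monomial m'' c * xv 2 0, mul_mem hS (xv0_mem 2)⟩, ?_⟩
        have hco : ((-(⟨monomial m'' c * xv 2 0, mul_mem hS (xv0_mem 2)⟩ : SAlg) : SAlg) : Rinf)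
            = -(monomial m'' c * xv 2 0) := rfl
        rw [hco, hfeq, h3, h4]
        have heq : monomial m'' c * (xv 2 1 * xv 2 1) - -(monomial m'' c * xv 2 0) * xv 2 2
            = monomial m'' c * (xv 2 1 * xv 2 1 + xv 2 0 * xv 2 2) := by ring
        rw [heq]
        exact Mim_smul hS gen_c
  · -- weight-2 variable
    have hw' : Finsupp.weight wt m' = 0 := by omega
    have hS : (monomial m' c : Rinf) ∈ SAlg := monomial_mem_S _ _ (wt0_of_weight0 hw')
    have hx0 : xv s0.1.1 2 = X s0 := xv_wt s0 2 h2
    have hfeq : (monomial m c : Rinf) = monomial m' c * xv s0.1.1 2 := by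
      rw [hmon, hx0]; ring
    rcases (show 3 ≤ s0.1.1 ∨ s0.1.1 = 2 by omega) with h3 | h3
    · refine ⟨0, ?_⟩
      have : (((0 : SAlg) : Rinf)) = 0 := rfl
      rw [this, zero_mul, sub_zero, hfeq]
      exact Mim_smul hS (gen_a h3)
    · refine ⟨⟨monomial m' c, hS⟩, ?_⟩
      have hco : (((⟨monomial m' c, hS⟩ : SAlg)) : Rinf) = monomial m' c := rfl
      rw [hco, hfeq, h3, sub_self]
      exact Submodule.zero_mem _

lemma part1 : ∀ f ∈ W 2, ∃ s : SAlg, f - (s : Rinf) * xv 2 2 ∈ Mim := by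
  intro f hf
  rw [← support_sum_monomial_coeff f]
  refine Finset.sum_induction _ (fun g => ∃ s : SAlg, g - (s : Rinf) * xv 2 2 ∈ Mim)
    ?_ ?_ ?_
  · rintro x y ⟨s1, h1⟩ ⟨s2, h2⟩
    refine ⟨s1 + s2, ?_⟩
    have heq : x + y - ((s1 + s2 : SAlg) : Rinf) * xv 2 2
        = (x - (s1 : Rinf) * xv 2 2) + (y - (s2 : Rinf) * xv 2 2) := by
      push_cast; ring
    rw [heq]
    exact Submodule.add_mem _ h1 h2
  · refine ⟨0, ?_⟩
    have : (((0 : SAlg) : Rinf)) = 0 := rfl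
    rw [this, zero_mul, sub_zero]
    exact Submodule.zero_mem _
  · intro m hm
    exact key m _ (hf (mem_support_iff.mp hm))

-- ### Part 2
def Igens : Set SAlg := insert ((eS 2) ^ 2) {g : SAlg | ∃ n, 3 ≤ n ∧ g = eS n}
def Isp : Ideal SAlg := Ideal.span Igens

lemma part2_back {s : SAlg} (hs : s ∈ Isp) : (s : Rinf) * xv 2 2 ∈ Mim := by
  induction hs using Submodule.span_induction with
  | mem x hx =>
    rcases hx with hx | ⟨n, hn, rfl⟩
    · rw [hx]
      have hc : (((eS 2 ^ 2 : SAlg)) : Rinf) = xv 2 0 * xv 2 0 := by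
        push_cast
        rw [show ((eS 2 : SAlg) : Rinf) = xv 2 0 from rfl]
        ring
      rw [hc]
      exact gen_f
    · rw [show ((eS n : SAlg) : Rinf) = xv n 0 from rfl]
      exact gen_e hn
  | zero =>
    rw [show (((0 : SAlg)) : Rinf) = 0 from rfl, zero_mul]
    exact Submodule.zero_mem _
  | add x y hx hy ihx ihy =>
    have : (((x + y : SAlg)) : Rinf) * xv 2 2
        = (x : Rinf) * xv 2 2 + (y : Rinf) * xv 2 2 := by push_cast; ring
    rw [this]
    exact Submodule.add_mem _ ihx ihy
  | smul a x hx ih =>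
    have : (((a • x : SAlg)) : Rinf) * xv 2 2 = (a : Rinf) * ((x : Rinf) * xv 2 2) := by
      rw [smul_eq_mul]; push_cast; ring
    rw [this]
    exact Mim_smul a.2 ih

lemma SAlg_induction {p : SAlg → Prop} (hmem : ∀ n, 2 ≤ n → p (eS n))
    (halg : ∀ r : ℚ, p (algebraMap ℚ SAlg r))
    (hadd : ∀ x y, p x → p y → p (x + y))
    (hmul : ∀ x y, p x → p y → p (x * y)) (s : SAlg) : p s := by
  have main : ∀ x (_ : x ∈ Algebra.adjoin ℚ {f : Rinf | ∃ n, 2 ≤ n ∧ f = xv n 0}),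
      ∀ hx' : x ∈ SAlg, p ⟨x, hx'⟩ := by
    intro x hx
    induction hx using Algebra.adjoin_induction with
    | mem y hy =>
      intro hx'
      obtain ⟨n, hn, rfl⟩ := hy
      have : (⟨xv n 0, hx'⟩ : SAlg) = eS n := Subtype.ext rfl
      rw [this]
      exact hmem n hn
    | algebraMap r =>
      intro hx'
      have : (⟨algebraMap ℚ Rinf r, hx'⟩ : SAlg) = algebraMap ℚ SAlg r :=
        Subtype.ext rfl
      rw [this]
      exact halg r
    | add x y hx hy ihx ihy =>
      intro hx'
      have : (⟨x + y, hx'⟩ : SAlg) = (⟨x, hx⟩ : SAlg) + (⟨y, hy⟩ : SAlg) :=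
        Subtype.ext rfl
      rw [this]
      exact hadd _ _ (ihx hx) (ihy hy)
    | mul x y hx hy ihx ihy =>
      intro hx'
      have : (⟨x * y, hx'⟩ : SAlg) = (⟨x, hx⟩ : SAlg) * (⟨y, hy⟩ : SAlg) :=
        Subtype.ext rfl
      rw [this]
      exact hmul _ _ (ihx hx) (ihy hy)
  exact (Subtype.eta s s.2 ▸ main s.1 s.2 s.2 : p s)

lemma decomp (s : SAlg) : ∃ c0 c1 : ℚ,
    s - (algebraMap ℚ SAlg c0 + algebraMap ℚ SAlg c1 * eS 2) ∈ Isp := by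
  induction s using SAlg_induction with
  | hmem n hn =>
    rcases (show n = 2 ∨ 3 ≤ n by omega) with h | h
    · subst h
      refine ⟨0, 1, ?_⟩
      rw [map_zero, map_one, zero_add, one_mul, sub_self]
      exact Submodule.zero_mem _
    · refine ⟨0, 0, ?_⟩
      rw [map_zero, zero_mul, add_zero, sub_zero]
      exact Ideal.subset_span (Set.mem_insert_of_mem _ ⟨n, h, rfl⟩)
  | halg r =>
    refine ⟨r, 0, ?_⟩
    rw [map_zero, zero_mul, add_zero, sub_self]
    exact Submodule.zero_mem _
  | hadd x y hx hy =>
    obtain ⟨c0, c1, hx⟩ := hx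
    obtain ⟨d0, d1, hy⟩ := hy
    refine ⟨c0 + d0, c1 + d1, ?_⟩
    have heq : x + y - (algebraMap ℚ SAlg (c0 + d0) + algebraMap ℚ SAlg (c1 + d1) * eS 2)
        = (x - (algebraMap ℚ SAlg c0 + algebraMap ℚ SAlg c1 * eS 2))
          + (y - (algebraMap ℚ SAlg d0 + algebraMap ℚ SAlg d1 * eS 2)) := by
      rw [map_add, map_add]; ring
    rw [heq]
    exact Submodule.add_mem _ hx hy
  | hmul x y hx hy =>
    obtain ⟨c0, c1, hx⟩ := hx
    obtain ⟨d0, d1, hy⟩ := hy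
    refine ⟨c0 * d0, c0 * d1 + c1 * d0, ?_⟩
    have heq : x * y - (algebraMap ℚ SAlg (c0 * d0)
          + algebraMap ℚ SAlg (c0 * d1 + c1 * d0) * eS 2)
        = x * (y - (algebraMap ℚ SAlg d0 + algebraMap ℚ SAlg d1 * eS 2))
          + (algebraMap ℚ SAlg d0 + algebraMap ℚ SAlg d1 * eS 2) *
            (x - (algebraMap ℚ SAlg c0 + algebraMap ℚ SAlg c1 * eS 2))
          + algebraMap ℚ SAlg (c1 * d1) * (eS 2) ^ 2 := by
      rw [map_mul, map_add, map_mul, map_mul, map_mul]; ring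
    rw [heq]
    refine Submodule.add_mem _ (Submodule.add_mem _ ?_ ?_) ?_
    · exact Ideal.mul_mem_left _ _ hy
    · exact Ideal.mul_mem_left _ _ hx
    · exact Ideal.mul_mem_left _ _ (Ideal.subset_span (Set.mem_insert _ _))

-- ### the detecting quotient A = ℚ[y0,y1,y2]
abbrev Aring : Type := MvPolynomial (Fin 3) ℚ

def fval : Fin 3 → Aring := fun i => if i = 0 then 0 else if i = 1 then X 0 else X 1

def pf : Idx → Aring := fun s =>
  if _ : s.1.1 = 2 then X (⟨s.1.2, by have := s.2.2; omega⟩ : Fin 3) else 0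

def piA : Rinf →ₐ[ℚ] Aring := aeval pf

def dA : Derivation ℚ Aring Aring := mkDerivation ℚ fval

lemma piA_X (s : Idx) : piA (X s) = pf s := by simp [piA]

lemma piA_xv2 (k : ℕ) (hk : k ≤ 2) (i : Fin 3) (hik : i.1 = k) : piA (xv 2 k) = X i := by
  rw [xv_eq 2 k le_rfl hk, piA_X]
  rw [pf]
  rw [dif_pos rfl]
  congr 1
  exact Fin.ext hik.symm

lemma piA_xvn0 {n : ℕ} (hn : 3 ≤ n) : piA (xv n 0) = 0 := by
  rw [xv_eq n 0 (by omega) (by omega), piA_X, pf,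
    dif_neg (fun h => absurd (show n = 2 from h) (by omega))]

lemma dA_X (i : Fin 3) : dA (X i) = fval i := mkDerivation_X _ _ _

lemma leibA (a b : Aring) : dA (a * b) = a * dA b + b * dA a := by
  rw [dA.leibniz, smul_eq_mul, smul_eq_mul]

lemma comm_DX (s : Idx) : piA (Dinf (X s)) = dA (piA (X s)) := by
  obtain ⟨⟨n, k⟩, hn, hk⟩ := s
  rw [D_X, piA_X]
  by_cases h2 : n = 2
  · subst h2
    rw [show pf ⟨(2, k), ⟨hn, hk⟩⟩ = X (⟨k, by omega⟩ : Fin 3) from dif_pos rfl, dA_X]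
    interval_cases k
    · show piA 0 = (0 : Aring)
      exact map_zero piA
    · show piA (xv 2 0) = X 0
      exact piA_xv2 0 (by omega) 0 rfl
    · show piA (xv 2 1) = X 1
      exact piA_xv2 1 (by omega) 1 rfl
  · rw [show pf ⟨(n, k), ⟨hn, hk⟩⟩ = 0 from dif_neg h2, map_zero]
    by_cases hk0 : k = 0
    · rw [if_pos hk0, map_zero]
    · rw [if_neg hk0]
      show piA (xv n (k - 1)) = 0
      rw [xv_eq n (k-1) hn (by omega), piA_X, pf, dif_neg h2]

lemma Dcomm (p : Rinf) : piA (Dinf p) = dA (piA p) := by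
  induction p using MvPolynomial.induction_on with
  | C a =>
    have h1 : Dinf (C a : Rinf) = 0 := by
      rw [show (C a : Rinf) = algebraMap ℚ Rinf a from rfl]
      exact Dinf.map_algebraMap a
    have h2 : dA (C a : Aring) = 0 := by
      rw [show (C a : Aring) = algebraMap ℚ Aring a from rfl]
      exact dA.map_algebraMap a
    rw [h1, map_zero, show piA (C a) = C a from by simp [piA], h2]
  | add p q ihp ihq => rw [map_add, map_add, map_add, ihp, ihq, map_add]
  | mul_X p s ih =>
    rw [leib, map_add, map_mul, map_mul, ih, comm_DX, map_mul, leibA]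

-- ### invariant functionals on Aring
def E1 : Fin 3 →₀ ℕ := Finsupp.single 2 1
def E2 : Fin 3 →₀ ℕ := Finsupp.single 0 1 + Finsupp.single 2 1
def E3 : Fin 3 →₀ ℕ := Finsupp.single 1 2

lemma fin3_ext {u v : Fin 3 →₀ ℕ} (h0 : u 0 = v 0) (h1 : u 1 = v 1) (h2 : u 2 = v 2) :
    u = v := by
  ext i
  fin_cases i <;> assumption

lemma dA_monomial (u : Fin 3 →₀ ℕ) (c : ℚ) :
    dA (monomial u c) = c • ∑ i ∈ u.support,
      monomial (u - Finsupp.single i 1) ((u i : ℚ)) * fval i := by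
  rw [dA, mkDerivation_monomial]
  simp only [Finsupp.sum, smul_eq_mul]

lemma notmem_E1_0 : ¬ (0 : Fin 3) ∈ E1.support := by
  simp [E1, Finsupp.single_apply]
lemma notmem_E1_1 : ¬ (1 : Fin 3) ∈ E1.support := by
  simp [E1, Finsupp.single_apply]
lemma mem_E2_0 : (0 : Fin 3) ∈ E2.support := by
  simp [E2, Finsupp.single_apply]
lemma notmem_E2_1 : ¬ (1 : Fin 3) ∈ E2.support := by
  simp [E2, Finsupp.single_apply]
lemma mem_E3_1 : (1 : Fin 3) ∈ E3.support := by
  simp [E3, Finsupp.single_apply]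
lemma notmem_E3_0 : ¬ (0 : Fin 3) ∈ E3.support := by
  simp [E3, Finsupp.single_apply]

lemma term1 (v : Fin 3 →₀ ℕ) (c : ℚ) (i : Fin 3) : coeff E1 (monomial v c * fval i) = 0 := by
  fin_cases i
  · show coeff E1 ((monomial v) c * fval 0) = 0
    rw [show fval 0 = 0 from rfl, mul_zero, coeff_zero]
  · show coeff E1 ((monomial v) c * fval 1) = 0
    rw [show fval 1 = X 0 from rfl, coeff_mul_X', if_neg notmem_E1_0]
  · show coeff E1 ((monomial v) c * fval 2) = 0
    rw [show fval 2 = X 1 from rfl, coeff_mul_X', if_neg notmem_E1_1]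

lemma Tvan1 (q : Aring) : coeff E1 (dA q) = 0 := by
  rw [← support_sum_monomial_coeff q, map_sum, coeff_sum]
  refine Finset.sum_eq_zero fun u _ => ?_
  rw [dA_monomial, coeff_smul, coeff_sum]
  rw [Finset.sum_eq_zero fun i _ => term1 _ _ i, smul_zero]

lemma E2_sub : E2 - Finsupp.single 0 1 = E1 := by
  rw [E2, add_tsub_cancel_left]; rfl

lemma E3_sub : E3 - Finsupp.single 1 1 = Finsupp.single 1 1 := by
  apply fin3_ext <;> simp [E3, Finsupp.tsub_apply, Finsupp.single_apply]

lemma inner_eq (u : Fin 3 →₀ ℕ) :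
    (if u - Finsupp.single 1 1 = E1 then (u 1 : ℚ) else 0)
      = (if u - Finsupp.single 2 1 = Finsupp.single 1 1 then (u 2 : ℚ) else 0) := by
  by_cases hu : u 0 = 0 ∧ u 1 = 1 ∧ u 2 = 1
  · obtain ⟨a, b, cc⟩ := hu
    rw [if_pos, if_pos, b, cc]
    · apply fin3_ext <;> simp [Finsupp.tsub_apply, Finsupp.single_apply, a, b, cc]
    · apply fin3_ext <;> simp [E1, Finsupp.tsub_apply, Finsupp.single_apply, a, b, cc]
  · have hL : (if u - Finsupp.single 1 1 = E1 then (u 1 : ℚ) else 0) = 0 := by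
      split_ifs with h
      · have c0 := DFunLike.congr_fun h 0
        have c1 := DFunLike.congr_fun h 1
        have c2 := DFunLike.congr_fun h 2
        simp [E1, Finsupp.tsub_apply, Finsupp.single_apply] at c0 c1 c2
        have : u 1 = 0 := by omega
        rw [this, Nat.cast_zero]
      · rfl
    have hR : (if u - Finsupp.single 2 1 = Finsupp.single 1 1 then (u 2 : ℚ) else 0) = 0 := by
      split_ifs with h
      · have c0 := DFunLike.congr_fun h 0
        have c1 := DFunLike.congr_fun h 1
        have c2 := DFunLike.congr_fun h 2
        simp [Finsupp.tsub_apply, Finsupp.single_apply] at c0 c1 c2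
        have : u 2 = 0 := by omega
        rw [this, Nat.cast_zero]
      · rfl
    rw [hL, hR]

lemma Tvan2 (q : Aring) : coeff E2 (dA q) = coeff E3 (dA q) := by
  rw [← support_sum_monomial_coeff q, map_sum, coeff_sum, coeff_sum]
  refine Finset.sum_congr rfl fun u _ => ?_
  rw [dA_monomial, coeff_smul, coeff_smul, coeff_sum, coeff_sum]
  congr 1
  have hL : ∑ i ∈ u.support, coeff E2 (monomial (u - Finsupp.single i 1) ((u i : ℚ)) * fval i)
      = (if u - Finsupp.single 1 1 = E1 then (u 1 : ℚ) else 0) := by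
    rw [Finset.sum_eq_single 1]
    · rw [show fval 1 = X 0 from rfl, coeff_mul_X', if_pos mem_E2_0, E2_sub, coeff_monomial]
    · intro b _ hb1
      fin_cases b
      · show coeff E2 ((monomial (u - Finsupp.single 0 1)) ((u 0 : ℚ)) * fval 0) = 0
        rw [show fval 0 = 0 from rfl, mul_zero, coeff_zero]
      · exact absurd rfl hb1
      · show coeff E2 ((monomial (u - Finsupp.single 2 1)) ((u 2 : ℚ)) * fval 2) = 0
        rw [show fval 2 = X 1 from rfl, coeff_mul_X', if_neg notmem_E2_1]
    · intro h1
      rw [Finsupp.notMem_support_iff] at h1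
      rw [h1, Nat.cast_zero, monomial_zero, zero_mul, coeff_zero]
  have hR : ∑ i ∈ u.support, coeff E3 (monomial (u - Finsupp.single i 1) ((u i : ℚ)) * fval i)
      = (if u - Finsupp.single 2 1 = Finsupp.single 1 1 then (u 2 : ℚ) else 0) := by
    rw [Finset.sum_eq_single 2]
    · rw [show fval 2 = X 1 from rfl, coeff_mul_X', if_pos mem_E3_1, E3_sub, coeff_monomial]
    · intro b _ hb1
      fin_cases b
      · show coeff E3 ((monomial (u - Finsupp.single 0 1)) ((u 0 : ℚ)) * fval 0) = 0
        rw [show fval 0 = 0 from rfl, mul_zero, coeff_zero]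
      · show coeff E3 ((monomial (u - Finsupp.single 1 1)) ((u 1 : ℚ)) * fval 1) = 0
        rw [show fval 1 = X 0 from rfl, coeff_mul_X', if_neg notmem_E3_0]
      · exact absurd rfl hb1
    · intro h1
      rw [Finsupp.notMem_support_iff] at h1
      rw [h1, Nat.cast_zero, monomial_zero, zero_mul, coeff_zero]
  rw [hL, hR, inner_eq]

-- ### assembling part 2 forward
lemma Ifact {i : SAlg} (h : i ∈ Isp) : ∃ hA : Aring, piA (i : Rinf) = X 0 * (X 0 * hA) := by
  induction h using Submodule.span_induction with
  | mem x hx =>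
    rcases hx with hx | ⟨n, hn, rfl⟩
    · refine ⟨1, ?_⟩
      rw [hx]
      have hc : ((eS 2 ^ 2 : SAlg) : Rinf) = xv 2 0 * xv 2 0 := by
        push_cast
        rw [show ((eS 2 : SAlg) : Rinf) = xv 2 0 from rfl]
        ring
      rw [hc, map_mul, show piA (xv 2 0) = X 0 from piA_xv2 0 (by omega) 0 rfl]
      ring
    · refine ⟨0, ?_⟩
      rw [show ((eS n : SAlg) : Rinf) = xv n 0 from rfl, piA_xvn0 hn, mul_zero, mul_zero]
  | zero =>
    refine ⟨0, ?_⟩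
    rw [show (((0 : SAlg)) : Rinf) = 0 from rfl, map_zero, mul_zero, mul_zero]
  | add x y hx hy ihx ihy =>
    obtain ⟨h1, e1⟩ := ihx
    obtain ⟨h2, e2⟩ := ihy
    refine ⟨h1 + h2, ?_⟩
    rw [show ((x + y : SAlg) : Rinf) = (x : Rinf) + (y : Rinf) from rfl, map_add, e1, e2]
    ring
  | smul a x hx ih =>
    obtain ⟨h1, e1⟩ := ih
    refine ⟨piA (a : Rinf) * h1, ?_⟩
    have hc : ((a • x : SAlg) : Rinf) = (a : Rinf) * (x : Rinf) := by
      rw [smul_eq_mul]; rfl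
    rw [hc, map_mul, e1]
    ring

lemma neq_E1_E2 : E1 ≠ E2 := fun h => by
  have := DFunLike.congr_fun h 0
  simp [E1, E2, Finsupp.add_apply, Finsupp.single_apply] at this
lemma neq_E2_E1 : E2 ≠ E1 := fun h => neq_E1_E2 h.symm
lemma neq_E1_E3 : E1 ≠ E3 := fun h => by
  have := DFunLike.congr_fun h 2
  simp [E1, E3, Finsupp.single_apply] at this
lemma neq_E2_E3 : E2 ≠ E3 := fun h => by
  have := DFunLike.congr_fun h 0
  simp [E2, E3, Finsupp.add_apply, Finsupp.single_apply] at this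

lemma part2_fwd {s : SAlg} (h : (s : Rinf) * xv 2 2 ∈ Mim) : s ∈ Isp := by
  obtain ⟨g, hg, hDg⟩ := h
  obtain ⟨c0, c1, hdec⟩ := decomp s
  obtain ⟨hA, hpii⟩ := Ifact hdec
  have hs : (s : Rinf) = C c0 + C c1 * xv 2 0
      + ((s - (algebraMap ℚ SAlg c0 + algebraMap ℚ SAlg c1 * eS 2) : SAlg) : Rinf) := by
    push_cast
    rw [show ((eS 2 : SAlg) : Rinf) = xv 2 0 from rfl, MvPolynomial.algebraMap_eq]
    ring
  have hπ : piA ((s : Rinf) * xv 2 2) = dA (piA g) := by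
    rw [← hDg]
    exact Dcomm g
  have hval : piA ((s : Rinf) * xv 2 2)
      = monomial E1 c0 + monomial E2 c1 + X 0 * (X 0 * (hA * X 2)) := by
    rw [map_mul]
    conv_lhs => rw [hs]
    rw [map_add, map_add, map_mul]
    rw [show piA (C c0) = C c0 from by simp [piA], show piA (C c1) = C c1 from by simp [piA]]
    rw [show piA (xv 2 0) = X 0 from piA_xv2 0 (by omega) 0 rfl,
        show piA (xv 2 2) = X 2 from piA_xv2 2 (by omega) 2 rfl, hpii]
    have h1 : (C c0 : Aring) * X 2 = monomial E1 c0 := by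
      rw [show (X 2 : Aring) = monomial (Finsupp.single 2 1) 1 from rfl, C_mul_monomial,
        mul_one, E1]
    have h2 : (C c1 : Aring) * X 0 * X 2 = monomial E2 c1 := by
      rw [show (X 0 : Aring) = monomial (Finsupp.single 0 1) 1 from rfl,
        show (X 2 : Aring) = monomial (Finsupp.single 2 1) 1 from rfl,
        C_mul_monomial, monomial_mul, E2]
      norm_num
    rw [← h1, ← h2]
    ring
  have hc0 : c0 = 0 := by
    have hv := Tvan1 (piA g)
    rw [← hπ, hval, coeff_add, coeff_add, coeff_monomial, coeff_monomial,
      if_pos rfl, if_neg neq_E2_E1, coeff_X_mul', if_neg notmem_E1_0] at hv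
    simpa using hv
  have hc1 : c1 = 0 := by
    have hv := Tvan2 (piA g)
    rw [← hπ, hval, coeff_add, coeff_add, coeff_add, coeff_add,
      coeff_monomial, coeff_monomial, coeff_monomial, coeff_monomial,
      if_neg neq_E1_E2, if_pos rfl, if_neg neq_E1_E3, if_neg neq_E2_E3] at hv
    rw [coeff_X_mul', if_pos mem_E2_0, E2_sub, coeff_X_mul', if_neg notmem_E1_0,
      coeff_X_mul', if_neg notmem_E3_0] at hv
    simpa using hv
  rw [hc0, hc1] at hdec
  simpa using hdec

/-- The `S`-module map `S → R_∞^{(2)}/D_∞(R_∞^{(3)})`, `s ↦ [s·x_{2,2}]`, is surjective with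
kernel the ideal of `S` generated by `x_{2,0}²` and the `x_{n,0}` with `n ≥ 3`; hence
`R_∞^{(2)}/D_∞(R_∞^{(3)}) ≅ S/(x_{2,0}², x_{n,0} : n ≥ 3)` (the computation of
`H_st^even(Λ³H̃_ℚ)`). -/
theorem statement13 :
    (∀ f ∈ W 2, ∃ s : SAlg,
        f - (s : Rinf) * xv 2 2 ∈ Submodule.map Dinf.toLinearMap (W 3)) ∧
    (∀ s : SAlg,
        ((s : Rinf) * xv 2 2 ∈ Submodule.map Dinf.toLinearMap (W 3)) ↔
          s ∈ Ideal.span (insert ((eS 2) ^ 2) {g : SAlg | ∃ n, 3 ≤ n ∧ g = eS n})) := by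
  constructor
  · exact part1
  · exact fun s => ⟨fun h => part2_fwd h, fun h => part2_back h⟩

end
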